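/- Let (X_i,Z_i) and (X_j,Z_j) be two independent, identically distributed random pairs with values in {0,1}² and common joint pmf ψ; write p_{10} = ψ(1,0), p_{11} = ψ(1,1), p^Z = ψ(0,1)+ψ(1,1). Then the conditional covariance of X_i and X_j given the event Z_i = Z_j equals (p_{11}(1−p^Z) − p_{10}·p^Z)² / ((1−p^Z)² + (p^Z)²)². -/
import Mathlib


open Finset

/-- Let `(X_i, Z_i)` and `(X_j, Z_j)` be two independent,
identically distributed random pairs with values in `{0,1}²` and common joint pmf
`ψ`; write `p₁₀ = ψ(1,0)`, `p₁₁ = ψ(1,1)`, `p^Z = ψ(0,1) + ψ(1,1)`.  Then the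
conditional covariance of `X_i` and `X_j` given the event `Z_i = Z_j` (which has
probability `Peq = (1-p^Z)² + (p^Z)² > 0`) equals
`(p₁₁(1-p^Z) - p₁₀·p^Z)² / ((1-p^Z)² + (p^Z)²)²`.

Here `P(X_i = 1, X_j = 1, Z_i = Z_j) = ∑ z, ψ(1,z)·ψ(1,z)` and
`P(X_i = 1, Z_i = Z_j) = ∑ z, ψ(1,z)·(∑ x, ψ(x,z))`, and the conditional covariance
is `P(X_i=1, X_j=1 | E) - P(X_i=1 | E)·P(X_j=1 | E)`. -/
theorem cond_cov_even
    (ψ : Bool → Bool → ℝ)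
    (hpos : ∀ x z, 0 ≤ ψ x z)
    (hsum : ∑ x : Bool, ∑ z : Bool, ψ x z = 1)
    (p10 p11 pZ Peq : ℝ)
    (hp10 : p10 = ψ true false)
    (hp11 : p11 = ψ true true)
    (hpZ : pZ = ψ false true + ψ true true)
    (hPeq : Peq = ∑ x : Bool, ∑ y : Bool, ∑ z : Bool, ψ x z * ψ y z) :
    (∑ z : Bool, ψ true z * ψ true z) / Peq -
        ((∑ z : Bool, ψ true z * (∑ x : Bool, ψ x z)) / Peq) *
          ((∑ z : Bool, (∑ x : Bool, ψ x z) * ψ true z) / Peq) =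
      (p11 * (1 - pZ) - p10 * pZ) ^ 2 / ((1 - pZ) ^ 2 + pZ ^ 2) ^ 2 := by
  simp only [Fintype.sum_bool] at *
  set a := ψ false false; set b := ψ false true; set c := ψ true false; set d := ψ true true
  have h1 : 1 - pZ = a + c := by rw [hpZ]; linarith
  have hP' : Peq = (a + c)^2 + (b + d)^2 := by rw [hPeq]; ring
  have hPpos : 0 < Peq := by
    rw [hP']
    rcases eq_or_ne (b + d) 0 with h | h
    · have : a + c = 1 := by linarith
      rw [h, this]; norm_num
    · positivity
  rw [h1, hP', hp10, hp11, hpZ]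
  have hne : (a + c)^2 + (b + d)^2 ≠ 0 := by rw [← hP']; exact hPpos.ne'
  field_simp
  ring
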